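/- Let Ω ⊂ ℝⁿ be a bounded domain and v ∈ C(closure Ω). Let Γ_v be the convex envelope of v on closure(Ω), i.e. the pointwise supremum of all convex functions on closure(Ω) lying below v. Then the Monge–Ampère measure of Γ_v gives zero mass to the set {x ∈ Ω : Γ_v(x) < v(x)}. -/

import Mathlib

open Set MeasureTheory
open scoped RealInnerProductSpace

/-- The image of a set `S` under the subdifferential of `u` (relative to the domain `Ω`). -/
def subdiffImage {n : ℕ} (Ω : Set (EuclideanSpace ℝ (Fin n)))
    (u : EuclideanSpace ℝ (Fin n) → ℝ) (S : Set (EuclideanSpace ℝ (Fin n))) :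
    Set (EuclideanSpace ℝ (Fin n)) :=
  ⋃ x ∈ S, {p | ∀ y ∈ Ω, u x + ⟪p, y - x⟫ ≤ u y}

/-- The Monge–Ampère measure of the convex envelope `Γ_v` of a continuous function `v` gives
zero mass to the set where `Γ_v < v`. -/
theorem stmt_14 {n : ℕ} (Ω : Set (EuclideanSpace ℝ (Fin n)))
    (hΩo : IsOpen Ω) (hΩb : Bornology.IsBounded Ω)
    (v : EuclideanSpace ℝ (Fin n) → ℝ) (hv : ContinuousOn v (closure Ω))
    (Γ : EuclideanSpace ℝ (Fin n) → ℝ)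
    (hΓ : ∀ x, Γ x = sSup {t : ℝ | ∃ φ : EuclideanSpace ℝ (Fin n) → ℝ,
        ConvexOn ℝ (closure Ω) φ ∧ (∀ y ∈ closure Ω, φ y ≤ v y) ∧ φ x = t}) :
    volume (subdiffImage Ω Γ {x ∈ Ω | Γ x < v x}) = 0 := by
  classical
  rcases eq_empty_or_nonempty (subdiffImage Ω Γ {x ∈ Ω | Γ x < v x}) with he | hne
  · simp [he]
  obtain ⟨p₀, hp₀⟩ := hne
  simp only [subdiffImage, mem_iUnion, mem_setOf_eq, exists_prop, mem_sep_iff] at hp₀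
  obtain ⟨x₀, ⟨hx₀Ω, -⟩, -⟩ := hp₀
  have hKne : (closure Ω).Nonempty := ⟨x₀, subset_closure hx₀Ω⟩
  have hKcp : IsCompact (closure Ω) :=
    Metric.isCompact_of_isClosed_isBounded isClosed_closure hΩb.closure
  by_cases hconv : Convex ℝ (closure Ω)
  · -- main case: the closure is convex
    obtain ⟨z₀, hz₀K, hz₀⟩ := hKcp.exists_isMinOn hKne hv
    set m := v z₀ with hm_def
    have hbddS : ∀ x ∈ closure Ω, BddAbove {t : ℝ | ∃ φ : EuclideanSpace ℝ (Fin n) → ℝ,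
        ConvexOn ℝ (closure Ω) φ ∧ (∀ y ∈ closure Ω, φ y ≤ v y) ∧ φ x = t} := by
      intro x hx
      exact ⟨v x, by rintro t ⟨φ, -, h2, rfl⟩; exact h2 x hx⟩
    have hΓle : ∀ x ∈ closure Ω, Γ x ≤ v x := by
      intro x hx
      rw [hΓ x]
      refine csSup_le ⟨m, fun _ => m, convexOn_const m hconv, fun y hy => hz₀ hy, rfl⟩ ?_
      rintro t ⟨φ, -, h2, rfl⟩; exact h2 x hx
    have hΓge : ∀ φ : EuclideanSpace ℝ (Fin n) → ℝ, ConvexOn ℝ (closure Ω) φ →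
        (∀ y ∈ closure Ω, φ y ≤ v y) → ∀ x ∈ closure Ω, φ x ≤ Γ x := by
      intro φ h1 h2 x hx
      rw [hΓ x]
      exact le_csSup (hbddS x hx) ⟨φ, h1, h2, rfl⟩
    have hmΓ : ∀ x ∈ closure Ω, m ≤ Γ x := fun x hx =>
      hΓge (fun _ => m) (convexOn_const m hconv) (fun y hy => hz₀ hy) x hx
    obtain ⟨R, hR⟩ := hKcp.isBounded.subset_closedBall 0
    have hR0 : 0 ≤ R := (norm_nonneg z₀).trans (by simpa using hR hz₀K)
    set h : EuclideanSpace ℝ (Fin n) → ℝ :=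
      fun q => sSup ((fun z => ⟪q, z⟫ - Γ z) '' closure Ω) with hh
    have hKim : ∀ q, ((fun z => ⟪q, z⟫ - Γ z) '' closure Ω).Nonempty :=
      fun q => hKne.image _
    have hbddh : ∀ q, BddAbove ((fun z => ⟪q, z⟫ - Γ z) '' closure Ω) := by
      intro q
      refine ⟨‖q‖ * R - m, ?_⟩
      rintro t ⟨z, hz, rfl⟩
      have h1 : ⟪q, z⟫ ≤ ‖q‖ * R := by
        have hz' : ‖z‖ ≤ R := by simpa using hR hz
        calc ⟪q, z⟫ ≤ ‖q‖ * ‖z‖ := real_inner_le_norm q z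
          _ ≤ ‖q‖ * R := by nlinarith [norm_nonneg q]
      have h2 := hmΓ z hz
      simp only [mem_setOf_eq]
      linarith
    have hlip : LipschitzWith (Real.toNNReal R) h := by
      apply LipschitzWith.of_le_add_mul
      intro q1 q2
      rw [Real.coe_toNNReal _ hR0]
      apply csSup_le (hKim q1)
      rintro t ⟨z, hz, rfl⟩
      have h1 : ⟪q2, z⟫ - Γ z ≤ h q2 := le_csSup (hbddh q2) ⟨z, hz, rfl⟩
      have h2 : ⟪q1 - q2, z⟫ ≤ R * dist q1 q2 := by
        have hz' : ‖z‖ ≤ R := by simpa using hR hz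
        rw [dist_eq_norm]
        calc ⟪q1 - q2, z⟫ ≤ ‖q1 - q2‖ * ‖z‖ := real_inner_le_norm _ _
          _ ≤ R * ‖q1 - q2‖ := by nlinarith [norm_nonneg (q1 - q2)]
      have h3 : ⟪q1, z⟫ = ⟪q2, z⟫ + ⟪q1 - q2, z⟫ := by
        rw [← inner_add_left, add_sub_cancel]
      simp only [mem_setOf_eq]
      linarith
    refine measure_mono_null ?_ (show volume {p | ¬ DifferentiableAt ℝ h p} = 0 from ?_)
    · rintro p hp
      simp only [subdiffImage, mem_iUnion, mem_setOf_eq, exists_prop, mem_sep_iff] at hp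
      obtain ⟨x, ⟨hxΩ, hxlt⟩, hp⟩ := hp
      have hxK : x ∈ closure Ω := subset_closure hxΩ
      set ℓ : EuclideanSpace ℝ (Fin n) → ℝ := fun y => Γ x + ⟪p, y - x⟫ with hℓdef
      have hℓx : ℓ x = Γ x := by simp [hℓdef]
      have hℓcont : Continuous ℓ :=
        continuous_const.add (continuous_const.inner (continuous_id.sub continuous_const))
      have hℓleΩ : ∀ y ∈ Ω, ℓ y ≤ v y := fun y hy =>
        (hp y hy).trans (hΓle y (subset_closure hy))
      have hℓleK : ∀ y ∈ closure Ω, ℓ y ≤ v y := fun y hy =>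
        le_on_closure hℓleΩ hℓcont.continuousOn hv hy
      have hℓconv : ConvexOn ℝ (closure Ω) ℓ := by
        refine ⟨hconv, fun y hy z hz a b ha hb hab => le_of_eq ?_⟩
        simp only [hℓdef, inner_sub_right, inner_add_right, real_inner_smul_right, smul_eq_mul]
        linear_combination (⟪p, x⟫ - Γ x) * hab
      have hℓΓ : ∀ z ∈ closure Ω, ℓ z ≤ Γ z := hΓge ℓ hℓconv hℓleK
      have htouch : ∃ y ∈ closure Ω, ℓ y = v y := by
        by_contra hT
        push_neg at hT
        have hlt : ∀ y ∈ closure Ω, ℓ y < v y := fun y hy =>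
          lt_of_le_of_ne (hℓleK y hy) (hT y hy)
        obtain ⟨w, hwK, hw⟩ := hKcp.exists_isMinOn hKne (hv.sub hℓcont.continuousOn)
        set ε := v w - ℓ w with hεdef
        have hε : 0 < ε := sub_pos.2 (hlt w hwK)
        have hφconv : ConvexOn ℝ (closure Ω) (fun y => ℓ y + ε) :=
          hℓconv.add (convexOn_const ε hconv)
        have hφle : ∀ y ∈ closure Ω, ℓ y + ε ≤ v y := by
          intro y hy
          have h5 : v w - ℓ w ≤ v y - ℓ y := hw hy
          simp only [hεdef]
          linarith
        have := hΓge _ hφconv hφle x hxK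
        rw [hℓx] at this
        linarith
      obtain ⟨y, hyK, hyv⟩ := htouch
      have hyx : y ≠ x := by
        intro hyxeq
        rw [hyxeq, hℓx] at hyv
        exact absurd hyv (ne_of_lt hxlt)
      have hΓy : Γ y = ℓ y := le_antisymm (hyv ▸ hΓle y hyK) (hℓΓ y hyK)
      have hℓval : ∀ z, ⟪p, z⟫ - ℓ z = ⟪p, x⟫ - Γ x := by
        intro z
        simp only [hℓdef, inner_sub_right]
        ring
      have hpx : h p = ⟪p, x⟫ - Γ x := by
        apply le_antisymm
        · apply csSup_le (hKim p)
          rintro t ⟨z, hz, rfl⟩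
          have := hℓΓ z hz
          have := hℓval z
          simp only [mem_setOf_eq]
          linarith
        · exact le_csSup (hbddh p) ⟨x, hxK, by simp⟩
      have hsubgrad : ∀ w ∈ ({x, y} : Set (EuclideanSpace ℝ (Fin n))),
          ∀ q, h p + ⟪q - p, w⟫ ≤ h q := by
        intro w hw q
        have hwK : w ∈ closure Ω := by rcases hw with rfl | rfl; exacts [hxK, hyK]
        have hwval : ⟪p, w⟫ - Γ w = h p := by
          rcases hw with rfl | rfl
          · rw [hpx]
          · rw [hpx, hΓy, hℓval w]
        have h1 : ⟪q, w⟫ - Γ w ≤ h q := le_csSup (hbddh q) ⟨w, hwK, rfl⟩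
        have h2 : ⟪q, w⟫ = ⟪p, w⟫ + ⟪q - p, w⟫ := by
          rw [← inner_add_left, add_sub_cancel]
        linarith
      intro hdiff
      have key : ∀ w ∈ ({x, y} : Set (EuclideanSpace ℝ (Fin n))),
          fderiv ℝ h p = innerSL ℝ w := by
        intro w hw
        set g : EuclideanSpace ℝ (Fin n) → ℝ := fun q => h q - ⟪w, q⟫ with hgdef
        have hgmin : IsLocalMin g p := by
          apply Filter.Eventually.of_forall
          intro q
          have h1 := hsubgrad w hw q
          have h3 : ⟪q - p, w⟫ = ⟪w, q⟫ - ⟪w, p⟫ := by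
            rw [inner_sub_left, real_inner_comm q w, real_inner_comm p w]
          show h p - ⟪w, p⟫ ≤ h q - ⟪w, q⟫
          linarith
        have hgdiff : DifferentiableAt ℝ g p := hdiff.sub (innerSL ℝ w).differentiableAt
        have h0 : fderiv ℝ g p = 0 := hgmin.fderiv_eq_zero
        have hg2 : fderiv ℝ g p = fderiv ℝ h p - innerSL ℝ w := by
          have : g = fun q => h q - innerSL ℝ w q := rfl
          rw [this, fderiv_fun_sub hdiff (innerSL ℝ w).differentiableAt,
            (innerSL ℝ w).fderiv]
        rw [hg2] at h0
        have := sub_eq_zero.mp h0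
        exact this
      have hxy : innerSL ℝ x = innerSL ℝ y := by
        rw [← key x (by simp), key y (by simp)]
      exact hyx (ext_inner_right ℝ (fun d => by
        have := congrArg (fun f => f d) hxy
        simpa using this)).symm
    · have hae := hlip.ae_differentiableAt (μ := volume)
      rw [MeasureTheory.ae_iff] at hae
      exact hae
  · -- degenerate case: the closure is not convex, so `Γ ≡ 0`
    have hΓ0 : ∀ x, Γ x = 0 := by
      intro x
      rw [hΓ x]
      have hempty : {t : ℝ | ∃ φ : EuclideanSpace ℝ (Fin n) → ℝ,
          ConvexOn ℝ (closure Ω) φ ∧ (∀ y ∈ closure Ω, φ y ≤ v y) ∧ φ x = t} = ∅ := by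
        ext t
        simp only [mem_setOf_eq, mem_empty_iff_false, iff_false]
        rintro ⟨φ, hφ, -, -⟩
        exact hconv hφ.1
      rw [hempty, Real.sSup_empty]
    have hsub : subdiffImage Ω Γ {x ∈ Ω | Γ x < v x} ⊆ {0} := by
      rintro p hp
      simp only [subdiffImage, mem_iUnion, mem_setOf_eq, exists_prop, mem_sep_iff] at hp
      obtain ⟨x, ⟨hxΩ, -⟩, hp⟩ := hp
      simp only [hΓ0, zero_add] at hp
      simp only [mem_singleton_iff]
      by_contra hp0
      obtain ⟨ε, hε, hball⟩ := Metric.isOpen_iff.1 hΩo x hxΩ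
      have hpn : (0:ℝ) < ‖p‖ := norm_pos_iff.mpr hp0
      set y := x + (ε / (2 * ‖p‖)) • p with hy
      have hyΩ : y ∈ Ω := by
        apply hball
        rw [mem_ball_iff_norm, hy, add_sub_cancel_left, norm_smul]
        rw [Real.norm_eq_abs, abs_of_pos (by positivity)]
        rw [div_mul_eq_mul_div, mul_comm]
        rw [div_lt_iff₀ (by positivity)]
        nlinarith
      have := hp y hyΩ
      rw [hy, add_sub_cancel_left, real_inner_smul_right, real_inner_self_eq_norm_sq] at this
      have hpos : 0 < ε / (2 * ‖p‖) * ‖p‖ ^ 2 := by positivity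
      linarith
    refine measure_mono_null hsub ?_
    have hnontriv : Nontrivial (EuclideanSpace ℝ (Fin n)) := by
      by_contra hnt
      have hsing : (closure Ω).Subsingleton := by
        intro a _ b _
        by_contra hab
        exact hnt ⟨⟨a, b, hab⟩⟩
      exact hconv hsing.convex
    haveI := hnontriv
    exact measure_singleton 0
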